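/- Let μ be a probability measure on ℝⁿ such that for every unit vector ξ the function x ↦ P(⟨X,ξ⟩ ≥ x) is log-concave on ℝ (X ~ μ). Then the half-space depth q_μ is a log-concave function on ℝⁿ. -/

import Mathlib

open MeasureTheory Real Set

/-- Half-space depth of a probability measure on `ℝⁿ`. -/
noncomputable def hsDepth {n : ℕ} (μ : Measure (EuclideanSpace ℝ (Fin n)))
    (x : EuclideanSpace ℝ (Fin n)) : ℝ :=
  ⨅ ξ : {ξ : EuclideanSpace ℝ (Fin n) // ‖ξ‖ = 1},
    (μ {y | (inner ℝ x ξ.1 : ℝ) ≤ inner ℝ y ξ.1}).toReal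

/-- If every one-dimensional marginal tail function `x ↦ P(⟨X,ξ⟩ ≥ x)` of `μ`
is log-concave on `ℝ`, then the half-space depth `q_μ` is log-concave on `ℝⁿ`. -/
theorem hsDepth_logConcave {n : ℕ} (μ : Measure (EuclideanSpace ℝ (Fin n)))
    [IsProbabilityMeasure μ]
    (htails : ∀ ξ : EuclideanSpace ℝ (Fin n), ‖ξ‖ = 1 →
      ∀ a b : ℝ, ∀ l ∈ Set.Ioo (0 : ℝ) 1,
        (μ {y | a ≤ (inner ℝ y ξ : ℝ)}).toReal ^ (1 - l) *
          (μ {y | b ≤ (inner ℝ y ξ : ℝ)}).toReal ^ l ≤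
            (μ {y | (1 - l) * a + l * b ≤ (inner ℝ y ξ : ℝ)}).toReal) :
    ∀ x y : EuclideanSpace ℝ (Fin n), ∀ l ∈ Set.Ioo (0 : ℝ) 1,
      hsDepth μ x ^ (1 - l) * hsDepth μ y ^ l ≤ hsDepth μ ((1 - l) • x + l • y) := by
  intro x y l hl
  obtain ⟨hl0, hl1⟩ := hl
  have hl1' : (0:ℝ) ≤ 1 - l := by linarith
  set S := {ξ : EuclideanSpace ℝ (Fin n) // ‖ξ‖ = 1}
  by_cases hne : Nonempty S
  · -- nonempty case
    have hbddf : ∀ (z : EuclideanSpace ℝ (Fin n)),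
        BddBelow (Set.range fun ξ : S =>
          (μ {w | (inner ℝ z ξ.1 : ℝ) ≤ inner ℝ w ξ.1}).toReal) := by
      intro z
      refine ⟨0, ?_⟩
      rintro r ⟨ξ, rfl⟩
      exact ENNReal.toReal_nonneg
    have hx0 : 0 ≤ hsDepth μ x := Real.iInf_nonneg fun ξ => ENNReal.toReal_nonneg
    have hy0 : 0 ≤ hsDepth μ y := Real.iInf_nonneg fun ξ => ENNReal.toReal_nonneg
    refine le_ciInf fun ξ => ?_
    have hkey := htails ξ.1 ξ.2 (inner ℝ x ξ.1) (inner ℝ y ξ.1) l ⟨hl0, hl1⟩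
    have hinner : (inner ℝ ((1 - l) • x + l • y) ξ.1 : ℝ)
        = (1 - l) * inner ℝ x ξ.1 + l * inner ℝ y ξ.1 := by
      simp [inner_add_left, real_inner_smul_left, Finset.mul_sum, mul_assoc]
    have h1 : hsDepth μ x ≤ (μ {w | (inner ℝ x ξ.1 : ℝ) ≤ inner ℝ w ξ.1}).toReal :=
      ciInf_le (hbddf x) ξ
    have h2 : hsDepth μ y ≤ (μ {w | (inner ℝ y ξ.1 : ℝ) ≤ inner ℝ w ξ.1}).toReal :=
      ciInf_le (hbddf y) ξ
    calc hsDepth μ x ^ (1 - l) * hsDepth μ y ^ l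
        ≤ (μ {w | (inner ℝ x ξ.1 : ℝ) ≤ inner ℝ w ξ.1}).toReal ^ (1 - l) *
          (μ {w | (inner ℝ y ξ.1 : ℝ) ≤ inner ℝ w ξ.1}).toReal ^ l := by
          apply mul_le_mul
          · exact Real.rpow_le_rpow hx0 h1 hl1'
          · exact Real.rpow_le_rpow hy0 h2 (le_of_lt hl0)
          · exact Real.rpow_nonneg hy0 l
          · exact Real.rpow_nonneg (le_trans hx0 h1) (1 - l)
      _ ≤ (μ {w | (1 - l) * inner ℝ x ξ.1 + l * inner ℝ y ξ.1 ≤ (inner ℝ w ξ.1 : ℝ)}).toReal := hkey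
      _ = (μ {w | (inner ℝ ((1 - l) • x + l • y) ξ.1 : ℝ) ≤ inner ℝ w ξ.1}).toReal := by
          rw [hinner]
  · -- empty case: all infima are 0
    have hempty : IsEmpty S := not_nonempty_iff.mp hne
    have h0 : ∀ z, hsDepth μ z = 0 := by
      intro z
      unfold hsDepth
      exact Real.iInf_of_isEmpty _
    rw [h0, h0, h0, Real.zero_rpow (by linarith), Real.zero_rpow (ne_of_gt hl0), mul_zero]
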